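/- arXiv:0807.4343 — 3 statements merged into one kernel-verified Lean document; each statement's English description precedes it below -/
import Mathlib

section
/- For an infinite set Ω, the cofinality of the group Sym(Ω) is strictly greater than the cardinality of Ω; that is, Sym(Ω) cannot be written as the union of a chain of proper subgroups indexed by a set of cardinality at most |Ω|. -/
open Cardinal Set Equiv
open scoped Classical
open scoped commutatorElement

theorem Equiv.Perm.inv_apply_self {β : Type*} (f : Equiv.Perm β) (x : β) : f⁻¹ (f x) = x :=
  f.symm_apply_apply x

theorem Equiv.Perm.apply_inv_self {β : Type*} (f : Equiv.Perm β) (x : β) : f (f⁻¹ x) = x :=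
  f.apply_symm_apply x

namespace SymCofAux

variable {α : Type}

/-- cardinality of a set squeezed between an injection from α and α itself -/
lemma mk_set_eq_of_inj (S : Set α) (f : α → S) (hf : Function.Injective f) : #S = #α :=
  le_antisymm (Cardinal.mk_set_le S) (Cardinal.mk_le_of_injective hf)

lemma mk_eq_of_between {C S : Set α} (h : C ⊆ S) (hC : #C = #α) : #S = #α :=
  le_antisymm (Cardinal.mk_set_le S) (hC ▸ Cardinal.mk_le_mk_of_subset h)

/-- a permutation fixing the complement of U maps U into U -/
lemma maps_into_of_fix_compl (g : Equiv.Perm α) (U : Set α)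
    (hfix : ∀ x ∉ U, g x = x) : ∀ x ∈ U, g x ∈ U := by
  intro x hx
  by_contra hgx
  have h1 : g (g x) = g x := hfix _ hgx
  have := g.injective h1
  rw [this] at hgx
  exact hgx hx

/-- the subgroup of permutations supported inside U -/
def suppIn (U : Set α) : Subgroup (Equiv.Perm α) where
  carrier := {g | ∀ x ∉ U, g x = x}
  one_mem' := by intro x _; rfl
  mul_mem' := by
    intro a b ha hb x hx
    show a (b x) = x
    rw [hb x hx, ha x hx]
  inv_mem' := by
    intro a ha x hx
    show a⁻¹ x = x
    have := ha x hx
    conv_lhs => rw [← this]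
    exact a.symm_apply_apply x

lemma mem_suppIn {U : Set α} {g : Equiv.Perm α} : g ∈ suppIn U ↔ ∀ x ∉ U, g x = x := Iff.rfl

/-- glue three bijections between pieces of two partitions into a permutation -/
noncomputable def glue3 (P1 P2 P3 Q1 Q2 Q3 : Set α)
    (e1 : P1 ≃ Q1) (e2 : P2 ≃ Q2) (e3 : P3 ≃ Q3)
    (hPcov : ∀ x, x ∈ P1 ∨ x ∈ P2 ∨ x ∈ P3)
    (hP12 : ∀ x, x ∈ P1 → x ∉ P2) (hP13 : ∀ x, x ∈ P1 → x ∉ P3) (hP23 : ∀ x, x ∈ P2 → x ∉ P3)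
    (hQcov : ∀ x, x ∈ Q1 ∨ x ∈ Q2 ∨ x ∈ Q3)
    (hQ12 : ∀ x, x ∈ Q1 → x ∉ Q2) (hQ13 : ∀ x, x ∈ Q1 → x ∉ Q3) (hQ23 : ∀ x, x ∈ Q2 → x ∉ Q3) :
    Equiv.Perm α where
  toFun x :=
    if h1 : x ∈ P1 then e1 ⟨x, h1⟩
    else if h2 : x ∈ P2 then e2 ⟨x, h2⟩
    else e3 ⟨x, (hPcov x).resolve_left h1 |>.resolve_left h2⟩
  invFun y :=
    if h1 : y ∈ Q1 then e1.symm ⟨y, h1⟩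
    else if h2 : y ∈ Q2 then e2.symm ⟨y, h2⟩
    else e3.symm ⟨y, (hQcov y).resolve_left h1 |>.resolve_left h2⟩
  left_inv := by
    intro x
    by_cases h1 : x ∈ P1
    · simp only [dif_pos h1]
      have m1 : ((e1 ⟨x, h1⟩ : Q1) : α) ∈ Q1 := (e1 ⟨x, h1⟩).2
      simp only [dif_pos m1]
      have : (⟨(e1 ⟨x, h1⟩ : Q1), m1⟩ : Q1) = e1 ⟨x, h1⟩ := rfl
      rw [this, Equiv.symm_apply_apply]
    · by_cases h2 : x ∈ P2
      · simp only [dif_neg h1, dif_pos h2]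
        have m2 : ((e2 ⟨x, h2⟩ : Q2) : α) ∈ Q2 := (e2 ⟨x, h2⟩).2
        have nm1 : ((e2 ⟨x, h2⟩ : Q2) : α) ∉ Q1 := fun hmem => hQ12 _ hmem m2
        simp only [dif_neg nm1, dif_pos m2]
        have : (⟨(e2 ⟨x, h2⟩ : Q2), m2⟩ : Q2) = e2 ⟨x, h2⟩ := rfl
        rw [this, Equiv.symm_apply_apply]
      · simp only [dif_neg h1, dif_neg h2]
        set h3 := (hPcov x).resolve_left h1 |>.resolve_left h2 with hh3
        have m3 : ((e3 ⟨x, h3⟩ : Q3) : α) ∈ Q3 := (e3 ⟨x, h3⟩).2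
        have nm1 : ((e3 ⟨x, h3⟩ : Q3) : α) ∉ Q1 := fun hmem => hQ13 _ hmem m3
        have nm2 : ((e3 ⟨x, h3⟩ : Q3) : α) ∉ Q2 := fun hmem => hQ23 _ hmem m3
        simp only [dif_neg nm1, dif_neg nm2]
        have : (⟨(e3 ⟨x, h3⟩ : Q3), m3⟩ : Q3) = e3 ⟨x, h3⟩ := rfl
        rw [this, Equiv.symm_apply_apply]
  right_inv := by
    intro y
    by_cases h1 : y ∈ Q1
    · simp only [dif_pos h1]
      have m1 : ((e1.symm ⟨y, h1⟩ : P1) : α) ∈ P1 := (e1.symm ⟨y, h1⟩).2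
      simp only [dif_pos m1]
      have : (⟨(e1.symm ⟨y, h1⟩ : P1), m1⟩ : P1) = e1.symm ⟨y, h1⟩ := rfl
      rw [this, Equiv.apply_symm_apply]
    · by_cases h2 : y ∈ Q2
      · simp only [dif_neg h1, dif_pos h2]
        have m2 : ((e2.symm ⟨y, h2⟩ : P2) : α) ∈ P2 := (e2.symm ⟨y, h2⟩).2
        have nm1 : ((e2.symm ⟨y, h2⟩ : P2) : α) ∉ P1 := fun hmem => hP12 _ hmem m2
        simp only [dif_neg nm1, dif_pos m2]
        have : (⟨(e2.symm ⟨y, h2⟩ : P2), m2⟩ : P2) = e2.symm ⟨y, h2⟩ := rfl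
        rw [this, Equiv.apply_symm_apply]
      · simp only [dif_neg h1, dif_neg h2]
        set h3 := (hQcov y).resolve_left h1 |>.resolve_left h2 with hh3
        have m3 : ((e3.symm ⟨y, h3⟩ : P3) : α) ∈ P3 := (e3.symm ⟨y, h3⟩).2
        have nm1 : ((e3.symm ⟨y, h3⟩ : P3) : α) ∉ P1 := fun hmem => hP13 _ hmem m3
        have nm2 : ((e3.symm ⟨y, h3⟩ : P3) : α) ∉ P2 := fun hmem => hP23 _ hmem m3
        simp only [dif_neg nm1, dif_neg nm2]
        have : (⟨(e3.symm ⟨y, h3⟩ : P3), m3⟩ : P3) = e3.symm ⟨y, h3⟩ := rfl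
        rw [this, Equiv.apply_symm_apply]

lemma glue3_apply1 (P1 P2 P3 Q1 Q2 Q3 : Set α) (e1 e2 e3) (hPcov hP12 hP13 hP23 hQcov hQ12 hQ13 hQ23)
    (x : α) (h1 : x ∈ P1) :
    glue3 P1 P2 P3 Q1 Q2 Q3 e1 e2 e3 hPcov hP12 hP13 hP23 hQcov hQ12 hQ13 hQ23 x = e1 ⟨x, h1⟩ := by
  simp only [glue3, Equiv.coe_fn_mk]
  rw [dif_pos h1]

lemma glue3_apply2 (P1 P2 P3 Q1 Q2 Q3 : Set α) (e1 e2 e3) (hPcov hP12 hP13 hP23 hQcov hQ12 hQ13 hQ23)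
    (x : α) (h1 : x ∉ P1) (h2 : x ∈ P2) :
    glue3 P1 P2 P3 Q1 Q2 Q3 e1 e2 e3 hPcov hP12 hP13 hP23 hQcov hQ12 hQ13 hQ23 x = e2 ⟨x, h2⟩ := by
  simp only [glue3, Equiv.coe_fn_mk]
  rw [dif_neg h1, dif_pos h2]

lemma glue3_apply3 (P1 P2 P3 Q1 Q2 Q3 : Set α) (e1 e2 e3) (hPcov hP12 hP13 hP23 hQcov hQ12 hQ13 hQ23)
    (x : α) (h1 : x ∉ P1) (h2 : x ∉ P2) (h3 : x ∈ P3) :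
    glue3 P1 P2 P3 Q1 Q2 Q3 e1 e2 e3 hPcov hP12 hP13 hP23 hQcov hQ12 hQ13 hQ23 x = e3 ⟨x, h3⟩ := by
  simp only [glue3, Equiv.coe_fn_mk]
  rw [dif_neg h1, dif_neg h2]

/-- a permutation supported in `A`, mapping `S` onto `T` via `e`, arbitrary on `A \ S`. -/
noncomputable def permWithin (A S T : Set α) (hS : S ⊆ A) (hT : T ⊆ A)
    (e : S ≃ T) (hc : #(A \ S : Set α) = #(A \ T : Set α)) : Equiv.Perm α :=
  glue3 S (A \ S) Aᶜ T (A \ T) Aᶜ e (Classical.choice (Cardinal.eq.mp hc)) (Equiv.refl _)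
    (fun x => by by_cases h : x ∈ A
                 · by_cases h2 : x ∈ S
                   · exact Or.inl h2
                   · exact Or.inr (Or.inl ⟨h, h2⟩)
                 · exact Or.inr (Or.inr h))
    (fun x hx h2 => h2.2 hx) (fun x hx h3 => h3 (hS hx)) (fun x hx h3 => h3 hx.1)
    (fun x => by by_cases h : x ∈ A
                 · by_cases h2 : x ∈ T
                   · exact Or.inl h2
                   · exact Or.inr (Or.inl ⟨h, h2⟩)
                 · exact Or.inr (Or.inr h))
    (fun x hx h2 => h2.2 hx) (fun x hx h3 => h3 (hT hx)) (fun x hx h3 => h3 hx.1)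

lemma permWithin_mem_suppIn (A S T : Set α) (hS : S ⊆ A) (hT : T ⊆ A) (e : ↥S ≃ ↥T) (hc : #↥(A \ S) = #↥(A \ T)) :
    permWithin A S T hS hT e hc ∈ suppIn A := by
  intro x hx
  rw [permWithin, glue3_apply3 (h1 := fun h => hx (hS h)) (h2 := fun h => hx h.1) (h3 := hx)]
  rfl

lemma permWithin_apply_mem (A S T : Set α) (hS : S ⊆ A) (hT : T ⊆ A) (e : ↥S ≃ ↥T) (hc : #↥(A \ S) = #↥(A \ T))
    (x : α) (h : x ∈ S) :
    permWithin A S T hS hT e hc x = (e ⟨x, h⟩ : T) := by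
  rw [permWithin, glue3_apply1 (h1 := h)]

lemma permWithin_apply_diff (A S T : Set α) (hS : S ⊆ A) (hT : T ⊆ A) (e : ↥S ≃ ↥T) (hc : #↥(A \ S) = #↥(A \ T))
    (x : α) (hx : x ∈ A) (hx2 : x ∉ S) :
    permWithin A S T hS hT e hc x ∈ A \ T := by
  have hmem : x ∈ A \ S := ⟨hx, hx2⟩
  rw [permWithin, glue3_apply2 (h1 := hx2) (h2 := hmem)]
  exact (Classical.choice (Cardinal.eq.mp hc) ⟨x, hmem⟩).2

lemma permWithin_image (A S T : Set α) (hS : S ⊆ A) (hT : T ⊆ A) (e : ↥S ≃ ↥T) (hc : #↥(A \ S) = #↥(A \ T)) :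
    ⇑(permWithin A S T hS hT e hc) '' S = T := by
  apply Set.eq_of_subset_of_subset
  · rintro y ⟨x, hx, rfl⟩
    rw [permWithin_apply_mem (h := hx)]
    exact (e ⟨x, hx⟩).2
  · intro t ht
    obtain ⟨s, hs2⟩ : ∃ s : ↥S, (e s : α) = t := ⟨e.symm ⟨t, ht⟩, by simp⟩
    refine ⟨(s : α), s.2, ?_⟩
    rw [permWithin_apply_mem (h := s.2)]
    rw [Subtype.coe_eta]
    exact hs2

/-- split a set of full cardinality into two full-cardinality halves -/
lemma exists_half [Infinite α] (S : Set α) (hs : #S = #α) :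
    ∃ S1 : Set α, S1 ⊆ S ∧ #S1 = #α ∧ #(S \ S1 : Set α) = #α := by
  have h2le : (2 : Cardinal) ≤ #α :=
    le_trans (by exact_mod_cast (Cardinal.nat_lt_aleph0 2).le) (Cardinal.aleph0_le_mk α)
  have h2 : #S = #(α × Bool) := by
    rw [hs, Cardinal.mk_prod]
    simp only [Cardinal.lift_id, Cardinal.mk_bool]
    exact (Cardinal.mul_eq_left (Cardinal.aleph0_le_mk α) h2le two_ne_zero).symm
  obtain ⟨E⟩ := Cardinal.eq.mp h2
  have key : ∀ (b : Bool) (a : α), (E.symm (a, b) : α) ∈ S ∧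
      (∀ h : (E.symm (a, b) : α) ∈ S, (E ⟨(E.symm (a, b) : α), h⟩).2 = b) := by
    intro b a
    refine ⟨(E.symm (a, b)).2, fun h => ?_⟩
    have : (⟨(E.symm (a, b) : α), h⟩ : S) = E.symm (a, b) := Subtype.ext rfl
    rw [this, Equiv.apply_symm_apply]
  have inj : ∀ b : Bool, Function.Injective (fun a : α => (E.symm (a, b) : α)) := by
    intro b a1 a2 h
    have : E.symm (a1, b) = E.symm (a2, b) := Subtype.ext h
    have := E.symm.injective this
    exact (Prod.mk.injEq _ _ _ _).mp this |>.1
  refine ⟨{x | ∃ h : x ∈ S, (E ⟨x, h⟩).2 = true}, fun x hx => hx.1, ?_, ?_⟩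
  · refine mk_set_eq_of_inj _ (fun a => ⟨(E.symm (a, true) : α),
      ⟨(key true a).1, (key true a).2 (key true a).1⟩⟩) ?_
    intro a1 a2 h
    have h2 := congrArg (Subtype.val) h
    exact inj true h2
  · refine mk_set_eq_of_inj _ (fun a => ⟨(E.symm (a, false) : α), ⟨(key false a).1, ?_⟩⟩) ?_
    · rintro ⟨h, hh⟩
      have := (key false a).2 h
      rw [hh] at this
      simp at this
    · intro a1 a2 h
      have h2 := congrArg (Subtype.val) h
      exact inj false h2

section Level

variable {Y : Type}

/-- a permutation of `Y × ℤ` acting levelwise -/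
def levelPerm (f : ℤ → Equiv.Perm Y) : Equiv.Perm (Y × ℤ) where
  toFun p := (f p.2 p.1, p.2)
  invFun p := ((f p.2)⁻¹ p.1, p.2)
  left_inv := by rintro ⟨y, n⟩; simp
  right_inv := by rintro ⟨y, n⟩; simp

@[simp] lemma levelPerm_apply (f : ℤ → Equiv.Perm Y) (y : Y) (n : ℤ) :
    levelPerm f (y, n) = (f n y, n) := rfl

lemma levelPerm_mul (f g : ℤ → Equiv.Perm Y) :
    levelPerm f * levelPerm g = levelPerm (fun n => f n * g n) := by
  apply Equiv.ext
  rintro ⟨y, n⟩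
  simp [Equiv.Perm.mul_apply]

lemma levelPerm_inv (f : ℤ → Equiv.Perm Y) :
    (levelPerm f)⁻¹ = levelPerm (fun n => (f n)⁻¹) := by
  apply Equiv.ext
  rintro ⟨y, n⟩
  have : levelPerm f (((f n)⁻¹ y), n) = (y, n) := by simp
  calc (levelPerm f)⁻¹ (y, n) = (levelPerm f)⁻¹ (levelPerm f (((f n)⁻¹ y), n)) := by rw [this]
    _ = (((f n)⁻¹ y), n) := (levelPerm f).symm_apply_apply _
    _ = levelPerm (fun n => (f n)⁻¹) (y, n) := rfl

lemma levelPerm_congr (f g : ℤ → Equiv.Perm Y) (h : ∀ n, f n = g n) :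
    levelPerm f = levelPerm g := by
  apply Equiv.ext; rintro ⟨y, n⟩; simp [h n]

/-- the shift on the level coordinate -/
def shiftZ : Equiv.Perm (Y × ℤ) where
  toFun p := (p.1, p.2 + 1)
  invFun p := (p.1, p.2 - 1)
  left_inv := by rintro ⟨y, n⟩; simp
  right_inv := by rintro ⟨y, n⟩; simp

@[simp] lemma shiftZ_apply (y : Y) (n : ℤ) : (shiftZ : Equiv.Perm (Y × ℤ)) (y, n) = (y, n + 1) := rfl

lemma shiftZ_inv_apply (y : Y) (n : ℤ) : (shiftZ : Equiv.Perm (Y × ℤ))⁻¹ (y, n) = (y, n - 1) := rfl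

lemma comm_levelPerm_shiftZ (f : ℤ → Equiv.Perm Y) :
    ⁅levelPerm f, (shiftZ : Equiv.Perm (Y × ℤ))⁆ = levelPerm (fun n => f n * (f (n - 1))⁻¹) := by
  apply Equiv.ext
  rintro ⟨y, n⟩
  show (levelPerm f) (shiftZ ((levelPerm f)⁻¹ (shiftZ⁻¹ (y, n)))) = _
  rw [shiftZ_inv_apply, levelPerm_inv]
  simp [Equiv.Perm.mul_apply, sub_add_cancel]

/-- the permutation acting as σ on level 0 only -/
def lvl0 (σ : Equiv.Perm Y) : Equiv.Perm (Y × ℤ) :=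
  levelPerm (fun n => if n = 0 then σ else 1)

lemma lvl0_eq_comms (σ : Equiv.Perm Y) :
    lvl0 σ = ⁅levelPerm (fun n => σ ^ n), (shiftZ : Equiv.Perm (Y × ℤ))⁆ *
      (⁅levelPerm (fun n => if 0 ≤ n then σ ^ n else 1), (shiftZ : Equiv.Perm (Y × ℤ))⁆)⁻¹ *
      (⁅levelPerm (fun n => if n ≤ -1 then σ ^ (n + 1) else 1), (shiftZ : Equiv.Perm (Y × ℤ))⁆)⁻¹ := by
  have e1 : ⁅levelPerm (fun n => σ ^ n), (shiftZ : Equiv.Perm (Y × ℤ))⁆ =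
      levelPerm (fun _ => σ) := by
    rw [comm_levelPerm_shiftZ]
    apply levelPerm_congr
    intro n
    rw [← zpow_sub]
    norm_num
  have e2 : ⁅levelPerm (fun n => if 0 ≤ n then σ ^ n else 1), (shiftZ : Equiv.Perm (Y × ℤ))⁆ =
      levelPerm (fun n => if 1 ≤ n then σ else 1) := by
    rw [comm_levelPerm_shiftZ]
    apply levelPerm_congr
    intro n
    rcases lt_trichotomy n 0 with h | h | h
    · rw [if_neg (by omega), if_neg (by omega), if_neg (by omega)]
      simp
    · subst h
      rw [if_pos le_rfl, if_neg (by omega), if_neg (by omega)]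
      simp
    · rw [if_pos (by omega), if_pos (by omega), if_pos (by omega), ← zpow_sub]
      have : n - (n - 1) = 1 := by ring
      rw [this, zpow_one]
  have e3 : ⁅levelPerm (fun n => if n ≤ -1 then σ ^ (n + 1) else 1), (shiftZ : Equiv.Perm (Y × ℤ))⁆ =
      levelPerm (fun n => if n ≤ -1 then σ else 1) := by
    rw [comm_levelPerm_shiftZ]
    apply levelPerm_congr
    intro n
    rcases lt_trichotomy n 0 with h | h | h
    · rw [if_pos (by omega), if_pos (by omega), if_pos (by omega), ← zpow_sub]
      have : n + 1 - (n - 1 + 1) = 1 := by ring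
      rw [this, zpow_one]
    · subst h
      rw [if_neg (by omega), if_pos (by omega), if_neg (by omega)]
      norm_num
    · rw [if_neg (by omega), if_neg (by omega), if_neg (by omega)]
      simp
  rw [e1, e2, e3, levelPerm_inv, levelPerm_inv, levelPerm_mul, levelPerm_mul, lvl0]
  apply levelPerm_congr
  intro n
  rcases lt_trichotomy n 0 with h | h | h
  · rw [if_neg (by omega), if_neg (by omega), if_pos (by omega)]
    simp
  · subst h
    rw [if_pos rfl, if_neg (by omega), if_neg (by omega)]
    simp
  · rw [if_neg (by omega), if_pos (by omega), if_neg (by omega)]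
    simp

end Level

section FactA

variable {Y : Type} [Infinite Y]

lemma mkZfull : #(Y × ℤ) = #Y := by
  rw [Cardinal.mk_prod]
  simp only [Cardinal.lift_id, Cardinal.mk_int]
  exact Cardinal.mul_eq_left (Cardinal.aleph0_le_mk Y) (Cardinal.aleph0_le_mk Y) Cardinal.aleph0_ne_zero

lemma three_pigeon {α : Type} [Infinite α] (S T U V : Set α)
    (hc : V ⊆ S ∪ T ∪ U) (hV : #V = #α) : #S = #α ∨ #T = #α ∨ #U = #α := by
  by_contra h
  push_neg at h
  obtain ⟨h1, h2, h3⟩ := h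
  have l1 : #S < #α := lt_of_le_of_ne (Cardinal.mk_set_le S) h1
  have l2 : #T < #α := lt_of_le_of_ne (Cardinal.mk_set_le T) h2
  have l3 : #U < #α := lt_of_le_of_ne (Cardinal.mk_set_le U) h3
  have : #V ≤ #(↥(S ∪ T ∪ U)) := Cardinal.mk_le_mk_of_subset hc
  have hb : #(↥(S ∪ T ∪ U)) ≤ #(↥(S ∪ T)) + #U := Cardinal.mk_union_le _ _
  have hb2 : #(↥(S ∪ T)) ≤ #S + #T := Cardinal.mk_union_le _ _
  have hlt : #(↥(S ∪ T ∪ U)) < #α := by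
    calc #(↥(S ∪ T ∪ U)) ≤ (#S + #T) + #U := le_trans hb (add_le_add hb2 le_rfl)
      _ < #α := Cardinal.add_lt_of_lt (Cardinal.aleph0_le_mk α)
          (Cardinal.add_lt_of_lt (Cardinal.aleph0_le_mk α) l1 l2) l3
  rw [hV] at this
  exact absurd (lt_of_le_of_lt this hlt) (lt_irrefl _)

lemma factA_aux (σ : Equiv.Perm (Y × ℤ)) (M F F' : Set (Y × ℤ))
    (hM : #M = #(Y × ℤ)) (hF : #F = #(Y × ℤ)) (hF' : #F' = #(Y × ℤ))
    (hMF : ∀ x ∈ M, x ∉ F) (hMF' : ∀ x ∈ M, x ∉ F')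
    (hsMF : ∀ x ∈ ⇑σ '' M, x ∉ F) (hsMF' : ∀ x ∈ ⇑σ '' M, x ∉ F')
    (hFF' : ∀ x ∈ F, x ∉ F') :
    ∃ τ1 τ2 : Equiv.Perm (Y × ℤ), ∃ S1 S2 : Set (Y × ℤ),
      σ = τ1 * τ2 ∧ (∀ x ∈ S1, τ1 x = x) ∧ (∀ x ∈ S2, τ2 x = x) ∧
      Cardinal.mk S1 = #(Y × ℤ) ∧ #S2 = #(Y × ℤ) := by
  have hMsub : M ⊆ Fᶜ := fun x hx => hMF x hx
  have hsMsub : ⇑σ '' M ⊆ Fᶜ := fun x hx => hsMF x hx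
  have hF'sub1 : F' ⊆ Fᶜ \ M := fun x hx => ⟨fun hxF => hFF' x hxF hx, fun hxM => hMF' x hxM hx⟩
  have hF'sub2 : F' ⊆ Fᶜ \ (⇑σ '' M) := fun x hx =>
    ⟨fun hxF => hFF' x hxF hx, fun hxM => hsMF' x hxM hx⟩
  have hc : #(↥(Fᶜ \ M)) = #(↥(Fᶜ \ (⇑σ '' M)))  := by
    rw [mk_eq_of_between hF'sub1 hF', mk_eq_of_between hF'sub2 hF']
  set e : ↥M ≃ ↥(⇑σ '' M) := Equiv.Set.image ⇑σ M σ.injective with he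
  set τ1 := permWithin Fᶜ M (⇑σ '' M) hMsub hsMsub e hc with hτ1
  refine ⟨τ1, τ1⁻¹ * σ, F, M, by group, ?_, ?_, hF, hM⟩
  · intro x hx
    exact permWithin_mem_suppIn Fᶜ M (⇑σ '' M) hMsub hsMsub e hc x (by simpa using hx)
  · intro x hx
    have h1 : τ1 x = σ x := by
      rw [hτ1, permWithin_apply_mem (h := hx)]
      rfl
    show τ1⁻¹ (σ x) = x
    rw [← h1]
    exact τ1.symm_apply_apply x

lemma factA (σ : Equiv.Perm (Y × ℤ)) :
    ∃ τ1 τ2 : Equiv.Perm (Y × ℤ), ∃ S1 S2 : Set (Y × ℤ),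
      σ = τ1 * τ2 ∧ (∀ x ∈ S1, τ1 x = x) ∧ (∀ x ∈ S2, τ2 x = x) ∧
      Cardinal.mk S1 = #(Y × ℤ) ∧ #S2 = #(Y × ℤ) := by
  classical
  set BP : Set (Y × ℤ) := {p | 1 ≤ p.2} with hBP
  set BM : Set (Y × ℤ) := {p | p.2 ≤ -1} with hBM
  set B0 : Set (Y × ℤ) := {p | p.2 = 0} with hB0
  have encinj : ∀ a b : ℤ, (if 0 ≤ a then 2*a+1 else -2*a) = (if 0 ≤ b then 2*b+1 else -2*b) → a = b := by
    intro a b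
    by_cases ha : 0 ≤ a <;> by_cases hb : 0 ≤ b <;> simp [ha, hb] <;> omega
  have encpos : ∀ a : ℤ, 1 ≤ (if 0 ≤ a then 2*a+1 else -2*a) := by
    intro a; by_cases ha : 0 ≤ a <;> simp [ha] <;> omega
  have mkBP : #BP = #(Y × ℤ) := by
    apply mk_set_eq_of_inj BP (fun p => ⟨(p.1, if 0 ≤ p.2 then 2*p.2+1 else -2*p.2), encpos p.2⟩)
    intro p q hpq
    have h1 : p.1 = q.1 := congrArg (fun z => (Subtype.val z).1) hpq
    have h2 : (if 0 ≤ p.2 then 2*p.2+1 else -2*p.2) = (if 0 ≤ q.2 then 2*q.2+1 else -2*q.2) :=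
      congrArg (fun z => (Subtype.val z).2) hpq
    exact Prod.ext h1 (encinj _ _ h2)
  have mkBM : #BM = #(Y × ℤ) := by
    apply mk_set_eq_of_inj BM (fun p => ⟨(p.1, -(if 0 ≤ p.2 then 2*p.2+1 else -2*p.2)), by
      have := encpos p.2; simp only [hBM, Set.mem_setOf_eq]; omega⟩)
    intro p q hpq
    have h1 : p.1 = q.1 := congrArg (fun z => (Subtype.val z).1) hpq
    have h2 : -(if 0 ≤ p.2 then 2*p.2+1 else -2*p.2) = -(if 0 ≤ q.2 then 2*q.2+1 else -2*q.2) :=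
      congrArg (fun z => (Subtype.val z).2) hpq
    exact Prod.ext h1 (encinj _ _ (by omega))
  have mkB0 : #B0 = #(Y × ℤ) := by
    have e : ↥B0 ≃ Y :=
      ⟨fun p => p.1.1, fun y => ⟨(y, 0), rfl⟩,
       fun p => by
        rcases p with ⟨⟨y, n⟩, h⟩
        have hn : n = 0 := h
        subst hn
        rfl,
       fun y => rfl⟩
    rw [Cardinal.mk_congr e, mkZfull]
  have hcov : BP ⊆ (BP ∩ ⇑σ ⁻¹' BP) ∪ (BP ∩ ⇑σ ⁻¹' BM) ∪ (BP ∩ ⇑σ ⁻¹' B0) := by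
    intro x hx
    rcases lt_trichotomy (σ x).2 0 with h | h | h
    · exact Or.inl (Or.inr ⟨hx, by simp only [Set.mem_preimage, hBM, Set.mem_setOf_eq]; omega⟩)
    · exact Or.inr ⟨hx, h⟩
    · exact Or.inl (Or.inl ⟨hx, by simp only [Set.mem_preimage, hBP, Set.mem_setOf_eq]; omega⟩)
  -- disjointness facts
  have dPM : ∀ x ∈ BP, x ∉ BM := by intro x hx h2; simp only [hBP, hBM, Set.mem_setOf_eq] at hx h2; omega
  have dP0 : ∀ x ∈ BP, x ∉ B0 := by intro x hx h2; simp only [hBP, hB0, Set.mem_setOf_eq] at hx h2; omega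
  have dM0 : ∀ x ∈ BM, x ∉ B0 := by intro x hx h2; simp only [hBM, hB0, Set.mem_setOf_eq] at hx h2; omega
  rcases three_pigeon _ _ _ _ hcov mkBP with hq | hq | hq
  · -- target block BP, use halves of BM
    obtain ⟨F, hFsub, hF, hF'⟩ := exists_half BM mkBM
    refine factA_aux σ (BP ∩ ⇑σ ⁻¹' BP) F (BM \ F) hq hF hF' ?_ ?_ ?_ ?_ ?_
    · exact fun x hx hxF => dPM x hx.1 (hFsub hxF)
    · exact fun x hx hxF => dPM x hx.1 hxF.1
    · rintro x ⟨w, hw, rfl⟩ hxF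
      exact dPM (σ w) hw.2 (hFsub hxF)
    · rintro x ⟨w, hw, rfl⟩ hxF
      exact dPM (σ w) hw.2 hxF.1
    · exact fun x hxF hxF' => hxF'.2 hxF
  · -- target block BM, use halves of B0
    obtain ⟨F, hFsub, hF, hF'⟩ := exists_half B0 mkB0
    refine factA_aux σ (BP ∩ ⇑σ ⁻¹' BM) F (B0 \ F) hq hF hF' ?_ ?_ ?_ ?_ ?_
    · exact fun x hx hxF => dP0 x hx.1 (hFsub hxF)
    · exact fun x hx hxF => dP0 x hx.1 hxF.1
    · rintro x ⟨w, hw, rfl⟩ hxF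
      exact dM0 (σ w) hw.2 (hFsub hxF)
    · rintro x ⟨w, hw, rfl⟩ hxF
      exact dM0 (σ w) hw.2 hxF.1
    · exact fun x hxF hxF' => hxF'.2 hxF
  · -- target block B0, use halves of BM
    obtain ⟨F, hFsub, hF, hF'⟩ := exists_half BM mkBM
    refine factA_aux σ (BP ∩ ⇑σ ⁻¹' B0) F (BM \ F) hq hF hF' ?_ ?_ ?_ ?_ ?_
    · exact fun x hx hxF => dPM x hx.1 (hFsub hxF)
    · exact fun x hx hxF => dPM x hx.1 hxF.1
    · rintro x ⟨w, hw, rfl⟩ hxF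
      exact dM0 (σ w) (hFsub hxF) hw.2
    · rintro x ⟨w, hw, rfl⟩ hxF
      exact dM0 (σ w) hxF.1 hw.2
    · exact fun x hxF hxF' => hxF'.2 hxF

end FactA

section NN

variable {Y : Type} [Infinite Y]

/-- generators: commutators with the shift -/
def NN : Subgroup (Equiv.Perm (Y × ℤ)) :=
  Subgroup.closure {c | ∃ φ : Equiv.Perm (Y × ℤ), c = ⁅φ, (shiftZ : Equiv.Perm (Y × ℤ))⁆}

lemma NN_conj_mem (g : Equiv.Perm (Y × ℤ)) (hg : g ∈ (NN : Subgroup (Equiv.Perm (Y × ℤ))))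
    (ψ : Equiv.Perm (Y × ℤ)) : ψ * g * ψ⁻¹ ∈ (NN : Subgroup (Equiv.Perm (Y × ℤ))) := by
  revert ψ
  refine Subgroup.closure_induction ?_ ?_ ?_ ?_ hg
  · rintro x ⟨φ, rfl⟩ ψ
    have hid : ψ * ⁅φ, (shiftZ : Equiv.Perm (Y × ℤ))⁆ * ψ⁻¹ =
        ⁅ψ * φ, (shiftZ : Equiv.Perm (Y × ℤ))⁆ * (⁅ψ, (shiftZ : Equiv.Perm (Y × ℤ))⁆)⁻¹ := by
      group
    rw [hid]
    exact mul_mem (Subgroup.subset_closure ⟨ψ * φ, rfl⟩)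
      (inv_mem (Subgroup.subset_closure ⟨ψ, rfl⟩))
  · intro ψ
    simpa using one_mem _
  · intro x y _ _ hx hy ψ
    have : ψ * (x * y) * ψ⁻¹ = (ψ * x * ψ⁻¹) * (ψ * y * ψ⁻¹) := by group
    rw [this]
    exact mul_mem (hx ψ) (hy ψ)
  · intro x _ hx ψ
    have : ψ * x⁻¹ * ψ⁻¹ = (ψ * x * ψ⁻¹)⁻¹ := by group
    rw [this]
    exact inv_mem (hx ψ)

lemma lvl0_mem_NN (σ : Equiv.Perm Y) : lvl0 σ ∈ (NN : Subgroup (Equiv.Perm (Y × ℤ))) := by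
  rw [lvl0_eq_comms]
  exact mul_mem (mul_mem (Subgroup.subset_closure ⟨_, rfl⟩)
    (inv_mem (Subgroup.subset_closure ⟨_, rfl⟩))) (inv_mem (Subgroup.subset_closure ⟨_, rfl⟩))

lemma eq_lvl0_of_supp (χ : Equiv.Perm (Y × ℤ)) (h : ∀ x : Y × ℤ, x.2 ≠ 0 → χ x = x) :
    ∃ σ : Equiv.Perm Y, χ = lvl0 σ := by
  set Λ : Set (Y × ℤ) := {p | p.2 = 0} with hΛ
  have hmem1 : χ ∈ suppIn Λ := fun x hx => h x hx
  have hmem2 : χ⁻¹ ∈ suppIn Λ := (suppIn Λ).inv_mem hmem1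
  have hlev : ∀ y : Y, (χ (y, 0)).2 = 0 :=
    fun y => maps_into_of_fix_compl χ Λ hmem1 (y, 0) rfl
  have hlevinv : ∀ y : Y, (χ⁻¹ (y, 0)).2 = 0 :=
    fun y => maps_into_of_fix_compl χ⁻¹ Λ hmem2 (y, 0) rfl
  have hz : ∀ y : Y, χ (y, 0) = ((χ (y, 0)).1, 0) := fun y => Prod.ext rfl (hlev y)
  have hzinv : ∀ y : Y, χ⁻¹ (y, 0) = ((χ⁻¹ (y, 0)).1, 0) := fun y => Prod.ext rfl (hlevinv y)
  refine ⟨⟨fun y => (χ (y, 0)).1, fun y => (χ⁻¹ (y, 0)).1, ?_, ?_⟩, ?_⟩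
  · intro y
    show (χ⁻¹ ((χ (y, 0)).1, 0)).1 = y
    rw [← hz y, Equiv.Perm.inv_apply_self]
  · intro y
    show (χ ((χ⁻¹ (y, 0)).1, 0)).1 = y
    rw [← hzinv y, Equiv.Perm.apply_inv_self]
  · apply Equiv.ext
    rintro ⟨y, n⟩
    by_cases hn : n = 0
    · subst hn
      rw [lvl0, levelPerm_apply, if_pos rfl]
      exact (hz y).trans rfl
    · rw [lvl0, levelPerm_apply, if_neg hn]
      rw [h (y, n) hn]
      rfl

lemma mk_compl_level0 : #↥(({p : Y × ℤ | p.2 = 0} : Set (Y × ℤ))ᶜ) = #(Y × ℤ) := by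
  have encpos : ∀ a : ℤ, 1 ≤ (if 0 ≤ a then 2*a+1 else -2*a) := by
    intro a; by_cases ha : 0 ≤ a <;> simp [ha] <;> omega
  have encinj : ∀ a b : ℤ, (if 0 ≤ a then 2*a+1 else -2*a) = (if 0 ≤ b then 2*b+1 else -2*b) → a = b := by
    intro a b
    by_cases ha : 0 ≤ a <;> by_cases hb : 0 ≤ b <;> simp [ha, hb] <;> omega
  apply mk_set_eq_of_inj _ (fun p => ⟨(p.1, if 0 ≤ p.2 then 2*p.2+1 else -2*p.2), by
    have := encpos p.2
    simp only [Set.mem_compl_iff, Set.mem_setOf_eq]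
    omega⟩)
  intro p q hpq
  have h1 : p.1 = q.1 := congrArg (fun z => (Subtype.val z).1) hpq
  have h2 : (if 0 ≤ p.2 then 2*p.2+1 else -2*p.2) = (if 0 ≤ q.2 then 2*q.2+1 else -2*q.2) :=
    congrArg (fun z => (Subtype.val z).2) hpq
  exact Prod.ext h1 (encinj _ _ h2)

lemma mk_level0 : #({p : Y × ℤ | p.2 = 0} : Set (Y × ℤ)) = #(Y × ℤ) := by
  have e : ↥({p : Y × ℤ | p.2 = 0}) ≃ Y :=
    ⟨fun p => p.1.1, fun y => ⟨(y, 0), rfl⟩,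
     fun p => by
      rcases p with ⟨⟨y, n⟩, h⟩
      have hn : n = 0 := h
      subst hn
      rfl,
     fun y => rfl⟩
  rw [Cardinal.mk_congr e, mkZfull]

lemma mem_NN_of_fix (τ : Equiv.Perm (Y × ℤ)) (S : Set (Y × ℤ))
    (hfix : ∀ x ∈ S, τ x = x) (hS : #S = #(Y × ℤ)) :
    τ ∈ (NN : Subgroup (Equiv.Perm (Y × ℤ))) := by
  obtain ⟨S1, hsub, hS1, hS2⟩ := exists_half S hS
  set Λ : Set (Y × ℤ) := {p | p.2 = 0} with hΛ
  have mkS1c : #↥(S1ᶜ) = #(Y × ℤ) := by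
    apply mk_eq_of_between (C := S \ S1) _ hS2
    exact fun x hx => hx.2
  have eψ : ↥Λ ≃ ↥(S1ᶜ) := Classical.choice (Cardinal.eq.mp (mk_level0.trans mkS1c.symm))
  have hcψ : #(↥(Set.univ \ Λ)) = #(↥(Set.univ \ S1ᶜ)) := by
    have e1 : Set.univ \ Λ = Λᶜ := by rw [Set.compl_eq_univ_diff]
    have e2 : Set.univ \ S1ᶜ = S1 := by rw [Set.diff_compl, Set.univ_inter]
    rw [e1, e2, mk_compl_level0, hS1]
  set ψ := permWithin Set.univ Λ (S1ᶜ) (Set.subset_univ _) (Set.subset_univ _) eψ hcψ with hψ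
  have hχ : ∀ x : Y × ℤ, x.2 ≠ 0 → (ψ⁻¹ * τ * ψ) x = x := by
    intro x hx
    have hdiff := permWithin_apply_diff Set.univ Λ (S1ᶜ) (Set.subset_univ _) (Set.subset_univ _)
      eψ hcψ x trivial hx
    have hmem : ψ x ∈ S1 := by
      have := hdiff.2
      simpa using this
    show ψ⁻¹ (τ (ψ x)) = x
    rw [hfix _ (hsub hmem), Equiv.Perm.inv_apply_self]
  obtain ⟨σy, hσy⟩ := eq_lvl0_of_supp (ψ⁻¹ * τ * ψ) hχ
  have : τ = ψ * (ψ⁻¹ * τ * ψ) * ψ⁻¹ := by group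
  rw [this, hσy]
  exact NN_conj_mem _ (lvl0_mem_NN σy) ψ

lemma NN_eq_top : ∀ τ : Equiv.Perm (Y × ℤ), τ ∈ (NN : Subgroup (Equiv.Perm (Y × ℤ))) := by
  intro τ
  obtain ⟨τ1, τ2, S1, S2, heq, hf1, hf2, hS1, hS2⟩ := factA τ
  rw [heq]
  exact mul_mem (mem_NN_of_fix τ1 S1 hf1 hS1) (mem_NN_of_fix τ2 S2 hf2 hS2)

end NN

section Slice

variable {α β : Type}

/-- transport of permutations along an equivalence, as a group hom -/
def transfer (e : α ≃ β) : Equiv.Perm α →* Equiv.Perm β where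
  toFun f := (e.symm.trans f).trans e
  map_one' := by
    apply Equiv.ext; intro x; simp
  map_mul' f g := by
    apply Equiv.ext; intro x; simp [Equiv.Perm.mul_apply]

@[simp] lemma transfer_apply (e : α ≃ β) (f : Equiv.Perm α) (x : β) :
    transfer e f x = e (f (e.symm x)) := rfl

variable {ι Z : Type}

/-- family of permutations acting slice-wise on ι × Z -/
def sliceFam (f : ι → Equiv.Perm Z) : Equiv.Perm (ι × Z) where
  toFun p := (p.1, f p.1 p.2)
  invFun p := (p.1, (f p.1)⁻¹ p.2)
  left_inv := by rintro ⟨i, z⟩; simp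
  right_inv := by rintro ⟨i, z⟩; simp

@[simp] lemma sliceFam_apply (f : ι → Equiv.Perm Z) (i : ι) (z : Z) :
    sliceFam f (i, z) = (i, f i z) := rfl

/-- permutation acting as χ on slice k, identity elsewhere; as a hom -/
noncomputable def sliceHom (k : ι) : Equiv.Perm Z →* Equiv.Perm (ι × Z) where
  toFun χ := sliceFam (fun i => if i = k then χ else 1)
  map_one' := by
    apply Equiv.ext; rintro ⟨i, z⟩
    simp only [sliceFam_apply]
    by_cases h : i = k <;> simp [h]
  map_mul' χ1 χ2 := by
    apply Equiv.ext; rintro ⟨i, z⟩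
    simp only [Equiv.Perm.mul_apply, sliceFam_apply]
    by_cases h : i = k <;> simp [h]

variable {Ω : Type} (E : Ω ≃ ι × Z) (k : ι)

/-- pure slice embedding of Perm Z into Perm Ω -/
noncomputable def pureSlice : Equiv.Perm Z →* Equiv.Perm Ω :=
  (transfer E.symm).comp (sliceHom k)

lemma pureSlice_apply_slice (χ : Equiv.Perm Z) (z : Z) :
    pureSlice E k χ (E.symm (k, z)) = E.symm (k, χ z) := by
  simp [pureSlice, sliceHom, transfer]

lemma pureSlice_apply_off (χ : Equiv.Perm Z) (x : Ω) (h : (E x).1 ≠ k) :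
    pureSlice E k χ x = x := by
  simp only [pureSlice, MonoidHom.comp_apply, sliceHom, MonoidHom.coe_mk, OneHom.coe_mk,
    transfer_apply, Equiv.symm_symm]
  have : sliceFam (fun i => if i = k then χ else 1) (E x) = E x := by
    rcases hEx : E x with ⟨i, z⟩
    rw [hEx] at h
    simp only [sliceFam_apply, if_neg h]
    simp
  rw [this, Equiv.symm_apply_apply]

lemma reassemble (x : Ω) (h : (E x).1 = k) : E.symm (k, (E x).2) = x := by
  conv_rhs => rw [← E.symm_apply_apply x]
  congr 1
  exact Prod.ext h.symm rfl

/-- matching: g agrees with φ on slice k -/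
def MatchSlice (g : Equiv.Perm Ω) (φ : Equiv.Perm Z) : Prop :=
  ∀ z : Z, g (E.symm (k, z)) = E.symm (k, φ z)

lemma matchSlice_inv {g : Equiv.Perm Ω} {φ : Equiv.Perm Z} (hm : MatchSlice E k g φ) :
    MatchSlice E k g⁻¹ φ⁻¹ := by
  intro z
  have := hm (φ⁻¹ z)
  rw [Equiv.Perm.apply_inv_self] at this
  rw [← this, Equiv.Perm.inv_apply_self]

lemma matchSlice_off {g : Equiv.Perm Ω} {φ : Equiv.Perm Z} (hm : MatchSlice E k g φ)
    (x : Ω) (h : (E x).1 ≠ k) : (E (g x)).1 ≠ k := by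
  intro hk
  have hx : g x = E.symm (k, (E (g x)).2) := (reassemble E k (g x) hk).symm
  have h2 : g (E.symm (k, φ⁻¹ ((E (g x)).2))) = E.symm (k, (E (g x)).2) := by
    rw [hm (φ⁻¹ ((E (g x)).2)), Equiv.Perm.apply_inv_self]
  rw [← h2] at hx
  have := g.injective hx
  apply h
  rw [this]
  simp

lemma comm_is_pure {g ρ : Equiv.Perm Ω} {φ r : Equiv.Perm Z}
    (hm : MatchSlice E k g φ) (hρ : ρ = pureSlice E k r) :
    g * ρ * g⁻¹ * ρ⁻¹ = pureSlice E k (φ * r * φ⁻¹ * r⁻¹) := by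
  have hminv := matchSlice_inv E k hm
  apply Equiv.ext
  intro x
  by_cases hx : (E x).1 = k
  · obtain ⟨z, rfl⟩ : ∃ z, x = E.symm (k, z) := ⟨(E x).2, (reassemble E k x hx).symm⟩
    show g (ρ (g⁻¹ (ρ⁻¹ _))) = _
    rw [hρ, ← map_inv]
    rw [pureSlice_apply_slice, hminv, pureSlice_apply_slice, hm, pureSlice_apply_slice]
    rfl
  · show g (ρ (g⁻¹ (ρ⁻¹ x))) = _
    rw [hρ, ← map_inv, pureSlice_apply_off E k _ x hx, pureSlice_apply_off E k _ x hx]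
    have hoff : (E (g⁻¹ x)).1 ≠ k := matchSlice_off E k hminv x hx
    rw [pureSlice_apply_off E k _ _ hoff]
    rw [Equiv.Perm.apply_inv_self]

/-- every permutation supported in slice k is a pure slice permutation -/
lemma suppIn_slice_eq (τ : Equiv.Perm Ω) (hτ : ∀ x : Ω, (E x).1 ≠ k → τ x = x) :
    ∃ χ : Equiv.Perm Z, τ = pureSlice E k χ := by
  set A : Set Ω := {x | (E x).1 = k} with hA
  have hm1 : τ ∈ suppIn A := fun x hx => hτ x hx
  have hm2 : τ⁻¹ ∈ suppIn A := (suppIn A).inv_mem hm1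
  have hin : ∀ z : Z, (E (τ (E.symm (k, z)))).1 = k := by
    intro z
    exact maps_into_of_fix_compl τ A hm1 (E.symm (k, z)) (by simp [hA])
  have hininv : ∀ z : Z, (E (τ⁻¹ (E.symm (k, z)))).1 = k := by
    intro z
    exact maps_into_of_fix_compl τ⁻¹ A hm2 (E.symm (k, z)) (by simp [hA])
  have hre : ∀ z : Z, τ (E.symm (k, z)) = E.symm (k, (E (τ (E.symm (k, z)))).2) :=
    fun z => (reassemble E k _ (hin z)).symm
  have hreinv : ∀ z : Z, τ⁻¹ (E.symm (k, z)) = E.symm (k, (E (τ⁻¹ (E.symm (k, z)))).2) :=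
    fun z => (reassemble E k _ (hininv z)).symm
  refine ⟨⟨fun z => (E (τ (E.symm (k, z)))).2, fun z => (E (τ⁻¹ (E.symm (k, z)))).2, ?_, ?_⟩, ?_⟩
  · intro z
    show (E (τ⁻¹ (E.symm (k, (E (τ (E.symm (k, z)))).2)))).2 = z
    rw [← hre z, Equiv.Perm.inv_apply_self]
    simp
  · intro z
    show (E (τ (E.symm (k, (E (τ⁻¹ (E.symm (k, z)))).2)))).2 = z
    rw [← hreinv z, Equiv.Perm.apply_inv_self]
    simp
  · apply Equiv.ext
    intro x
    by_cases hx : (E x).1 = k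
    · obtain ⟨z, rfl⟩ : ∃ z, x = E.symm (k, z) := ⟨(E x).2, (reassemble E k x hx).symm⟩
      rw [pureSlice_apply_slice]
      exact hre z
    · rw [pureSlice_apply_off E k _ x hx, hτ x hx]

end Slice

section LemmaL

variable {α : Type} [Infinite α]

lemma lemmaL_caseI (A B C1 C2 : Set α) (hAB : A ∪ B = Set.univ)
    (h1A : C1 ⊆ A) (h1B : C1 ⊆ B) (h2A : C2 ⊆ A) (h2B : C2 ⊆ B)
    (h12 : ∀ x ∈ C1, x ∉ C2)
    (hC1 : #C1 = #α) (hC2 : #C2 = #α)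
    (G : Subgroup (Equiv.Perm α)) (hGA : ∀ g ∈ suppIn A, g ∈ G) (hGB : ∀ g ∈ suppIn B, g ∈ G)
    (σ : Equiv.Perm α) (hcase : #↥(A \ (⇑σ '' Aᶜ)) = #α) : σ ∈ G := by
  classical
  have hB'B : Aᶜ ⊆ B := by
    intro x hx
    rcases (Set.eq_univ_iff_forall.mp hAB x).elim (fun h => absurd h hx) id with h
    exact h
  set W : Set α := (⇑σ '' Aᶜ) ∩ A with hW
  have hWle : #W ≤ #C1 := by
    rw [hC1]; exact Cardinal.mk_set_le W
  obtain ⟨j⟩ := (Cardinal.le_def _ _).mp hWle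
  have hjv : Function.Injective (fun w : ↥W => ((j w : ↥C1) : α)) := by
    intro a b hab
    exact j.injective (Subtype.ext hab)
  set T : Set α := Set.range (fun w : ↥W => ((j w : ↥C1) : α)) with hT
  have hTsub : T ⊆ C1 := by
    rintro x ⟨w, rfl⟩
    exact (j w).2
  have eWT : ↥W ≃ ↥T := Equiv.ofInjective _ hjv
  have hsetAW : A \ W = A \ (⇑σ '' Aᶜ) := by
    ext x
    constructor
    · rintro ⟨hxA, hxW⟩
      exact ⟨hxA, fun him => hxW ⟨him, hxA⟩⟩
    · rintro ⟨hxA, hxim⟩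
      exact ⟨hxA, fun hw => hxim hw.1⟩
  have hcα : #↥(A \ W) = #↥(A \ T) := by
    rw [hsetAW, hcase]
    symm
    apply mk_eq_of_between (C := C2) _ hC2
    intro x hx
    exact ⟨h2A hx, fun hxT => h12 x (hTsub hxT) hx⟩
  have hWA : W ⊆ A := Set.inter_subset_right
  have hTA : T ⊆ A := hTsub.trans h1A
  set α1 := permWithin A W T hWA hTA eWT hcα with hα1
  have hα1supp : α1 ∈ suppIn A := permWithin_mem_suppIn A W T hWA hTA eWT hcα
  -- behavior of α1 ∘ σ on Aᶜ
  have hkey : ∀ b ∈ Aᶜ, ((α1 * σ) b ∈ B ∧ (α1 * σ) b ∉ C2) := by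
    intro b hb
    show (α1 (σ b) ∈ B ∧ α1 (σ b) ∉ C2)
    by_cases hσb : σ b ∈ A
    · have hσbW : σ b ∈ W := ⟨⟨b, hb, rfl⟩, hσb⟩
      rw [permWithin_apply_mem (h := hσbW)]
      have hmemT : ((eWT ⟨σ b, hσbW⟩ : ↥T) : α) ∈ T := (eWT ⟨σ b, hσbW⟩).2
      exact ⟨h1B (hTsub hmemT), fun hc2 => h12 _ (hTsub hmemT) hc2⟩
    · have : α1 (σ b) = σ b := hα1supp _ hσb
      rw [this]
      exact ⟨hB'B hσb, fun hc2 => hσb (h2A hc2)⟩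
  set Y : Set α := ⇑(α1 * σ) '' Aᶜ with hY
  have hYB : Y ⊆ B := by
    rintro y ⟨b, hb, rfl⟩
    exact (hkey b hb).1
  have hYC2 : ∀ y ∈ Y, y ∉ C2 := by
    rintro y ⟨b, hb, rfl⟩
    exact (hkey b hb).2
  have hcβ : #↥(B \ Y) = #↥(B \ Aᶜ) := by
    have l1 : #↥(B \ Y) = #α := by
      apply mk_eq_of_between (C := C2) _ hC2
      intro x hx
      exact ⟨h2B hx, fun hxY => hYC2 x hxY hx⟩
    have l2 : #↥(B \ Aᶜ) = #α := by
      apply mk_eq_of_between (C := C1) _ hC1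
      intro x hx
      exact ⟨h1B hx, fun hxc => hxc (h1A hx)⟩
    rw [l1, l2]
  set e0 : ↥(Aᶜ : Set α) ≃ ↥Y := Equiv.Set.image ⇑(α1 * σ) Aᶜ (α1 * σ).injective with he0
  set β := permWithin B Y Aᶜ hYB hB'B e0.symm hcβ with hβ
  have hβsupp : β ∈ suppIn B := permWithin_mem_suppIn B Y Aᶜ hYB hB'B e0.symm hcβ
  set τ := β * (α1 * σ) with hτ
  have hτfix : ∀ b ∈ (Aᶜ : Set α), τ b = b := by
    intro b hb
    show β ((α1 * σ) b) = b
    have hmem : (α1 * σ) b ∈ Y := ⟨b, hb, rfl⟩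
    rw [permWithin_apply_mem (h := hmem)]
    have : e0.symm ⟨(α1 * σ) b, hmem⟩ = ⟨b, hb⟩ := by
      rw [Equiv.symm_apply_eq]
      apply Subtype.ext
      rfl
    rw [this]
  have hτsupp : τ ∈ suppIn A := fun x hx => hτfix x hx
  have hστ : σ = α1⁻¹ * (β⁻¹ * τ) := by
    rw [hτ]; group
  rw [hστ]
  exact mul_mem (inv_mem (hGA α1 hα1supp)) (mul_mem (inv_mem (hGB β hβsupp)) (hGA τ hτsupp))

lemma lemmaL (A B C1 C2 : Set α) (hAB : A ∪ B = Set.univ)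
    (h1A : C1 ⊆ A) (h1B : C1 ⊆ B) (h2A : C2 ⊆ A) (h2B : C2 ⊆ B)
    (h12 : ∀ x ∈ C1, x ∉ C2)
    (hC1 : #C1 = #α) (hC2 : #C2 = #α)
    (G : Subgroup (Equiv.Perm α)) (hGA : ∀ g ∈ suppIn A, g ∈ G) (hGB : ∀ g ∈ suppIn B, g ∈ G)
    (σ : Equiv.Perm α) : σ ∈ G := by
  classical
  rcases eq_or_lt_of_le (Cardinal.mk_set_le (A \ (⇑σ '' Aᶜ))) with hcase | hsmall
  · exact lemmaL_caseI A B C1 C2 hAB h1A h1B h2A h2B h12 hC1 hC2 G hGA hGB σ hcase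
  · -- case (ii): σ maps Aᶜ over almost all of A
    set S1 : Set α := C2 ∩ (⇑σ '' Aᶜ) with hS1def
    have hS1 : #S1 = #α := by
      by_contra hne
      have hlt : #S1 < #α := lt_of_le_of_ne (Cardinal.mk_set_le S1) hne
      have hcov : C2 ⊆ (A \ (⇑σ '' Aᶜ)) ∪ S1 := by
        intro x hx
        by_cases hxim : x ∈ ⇑σ '' Aᶜ
        · exact Or.inr ⟨hx, hxim⟩
        · exact Or.inl ⟨h2A hx, hxim⟩
      have : #C2 ≤ #↥((A \ (⇑σ '' Aᶜ)) ∪ S1) := Cardinal.mk_le_mk_of_subset hcov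
      have hb : #↥((A \ (⇑σ '' Aᶜ)) ∪ S1) ≤ #↥(A \ (⇑σ '' Aᶜ)) + #S1 := Cardinal.mk_union_le _ _
      have : #α < #α := by
        calc #α = #C2 := hC2.symm
          _ ≤ #↥(A \ (⇑σ '' Aᶜ)) + #S1 := le_trans this hb
          _ < #α := Cardinal.add_lt_of_lt (Cardinal.aleph0_le_mk α) hsmall hlt
      exact absurd this (lt_irrefl _)
    set S2 : Set α := Aᶜ ∩ (⇑σ '' A) with hS2def
    have hAdiff : A \ (⇑σ '' Aᶜ) = A ∩ (⇑σ '' A) := by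
      ext x
      constructor
      · rintro ⟨hxA, hxim⟩
        refine ⟨hxA, ⟨σ⁻¹ x, ?_, by simp⟩⟩
        by_contra hc
        exact hxim ⟨σ⁻¹ x, hc, by simp⟩
      · rintro ⟨hxA, ⟨a, ha, rfl⟩⟩
        refine ⟨hxA, ?_⟩
        rintro ⟨b, hb, heq⟩
        exact hb (σ.injective heq ▸ ha)
    have hS2 : #S2 = #α := by
      by_contra hne
      have hlt : #S2 < #α := lt_of_le_of_ne (Cardinal.mk_set_le S2) hne
      have hmkA : #A = #α := mk_eq_of_between h1A hC1
      have hmkimA : #↥(⇑σ '' A) = #α := by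
        rw [Cardinal.mk_image_eq σ.injective]; exact hmkA
      have hcov : (⇑σ '' A) ⊆ (A ∩ (⇑σ '' A)) ∪ S2 := by
        rintro x ⟨a, ha, rfl⟩
        by_cases hxA : σ a ∈ A
        · exact Or.inl ⟨hxA, ⟨a, ha, rfl⟩⟩
        · exact Or.inr ⟨hxA, ⟨a, ha, rfl⟩⟩
      have h1 : #↥(⇑σ '' A) ≤ #↥((A ∩ (⇑σ '' A)) ∪ S2) := Cardinal.mk_le_mk_of_subset hcov
      have hb : #↥((A ∩ (⇑σ '' A)) ∪ S2) ≤ #↥(A ∩ (⇑σ '' A)) + #S2 := Cardinal.mk_union_le _ _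
      rw [← hAdiff] at hb h1
      have : #α < #α := by
        calc #α = #↥(⇑σ '' A) := hmkimA.symm
          _ ≤ #↥(A \ (⇑σ '' Aᶜ)) + #S2 := le_trans h1 hb
          _ < #α := Cardinal.add_lt_of_lt (Cardinal.aleph0_le_mk α) hsmall hlt
      exact absurd this (lt_irrefl _)
    have e12 : ↥S1 ≃ ↥S2 := Classical.choice (Cardinal.eq.mp (hS1.trans hS2.symm))
    have hd12 : ∀ x ∈ S1, x ∉ S2 := by
      intro x hx hx2
      exact hx2.1 (h2A hx.1)
    -- the swap of S1 and S2
    set β1 := glue3 S1 S2 ((S1 ∪ S2)ᶜ) S2 S1 ((S1 ∪ S2)ᶜ) e12 e12.symm (Equiv.refl _)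
      (fun x => by
        by_cases h1 : x ∈ S1
        · exact Or.inl h1
        · by_cases h2 : x ∈ S2
          · exact Or.inr (Or.inl h2)
          · exact Or.inr (Or.inr (fun hc => hc.elim h1 h2)))
      hd12 (fun x hx hc => hc (Or.inl hx)) (fun x hx hc => hc (Or.inr hx))
      (fun x => by
        by_cases h1 : x ∈ S2
        · exact Or.inl h1
        · by_cases h2 : x ∈ S1
          · exact Or.inr (Or.inl h2)
          · exact Or.inr (Or.inr (fun hc => hc.elim h2 h1)))
      (fun x hx hc => hd12 x hc hx) (fun x hx hc => hc (Or.inr hx)) (fun x hx hc => hc (Or.inl hx))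
      with hβ1
  -- facts about β1
    have hβ1_S1 : ∀ x (hx : x ∈ S1), β1 x = (e12 ⟨x, hx⟩ : α) := by
      intro x hx
      rw [hβ1, glue3_apply1 (h1 := hx)]
    have hβ1_S2 : ∀ x (hx : x ∈ S2), β1 x = (e12.symm ⟨x, hx⟩ : α) := by
      intro x hx
      rw [hβ1, glue3_apply2 (h1 := fun hc => hd12 x hc hx) (h2 := hx)]
    have hβ1_rest : ∀ x, x ∉ S1 → x ∉ S2 → β1 x = x := by
      intro x h1 h2
      have h3 : x ∈ ((S1 ∪ S2)ᶜ : Set α) := fun hc => hc.elim h1 h2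
      rw [hβ1, glue3_apply3 (h1 := h1) (h2 := h2) (h3 := h3)]
      rfl
    have hβ1supp : β1 ∈ suppIn B := by
      intro x hx
      apply hβ1_rest
      · exact fun hc => hx (h2B hc.1)
      · intro hc
        have hB'B : Aᶜ ⊆ B := by
          intro y hy
          rcases (Set.eq_univ_iff_forall.mp hAB y).elim (fun h => absurd h hy) id with h
          exact h
        exact hx (hB'B hc.1)
    -- σ' = β1 * σ satisfies case (i)
    have hnew : #↥(A \ (⇑(β1 * σ) '' Aᶜ)) = #α := by
      apply mk_eq_of_between (C := S1) _ hS1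
      intro x hx
      constructor
      · exact h2A hx.1
      · rintro ⟨b, hb, heq⟩
        rw [Equiv.Perm.mul_apply] at heq
        by_cases hwS1 : σ b ∈ S1
        · rw [hβ1_S1 _ hwS1] at heq
          rw [← heq] at hx
          exact hd12 _ hx (e12 ⟨σ b, hwS1⟩).2
        · by_cases hwS2 : σ b ∈ S2
          · obtain ⟨a, ha, haeq⟩ := hwS2.2
            exact hb (σ.injective haeq ▸ ha)
          · rw [hβ1_rest _ hwS1 hwS2] at heq
            rw [← heq] at hx
            exact hwS1 ⟨hx.1, ⟨b, hb, rfl⟩⟩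
    have hσ' : (β1 * σ) ∈ G :=
      lemmaL_caseI A B C1 C2 hAB h1A h1B h2A h2B h12 hC1 hC2 G hGA hGB (β1 * σ) hnew
    have : σ = β1⁻¹ * (β1 * σ) := by group
    rw [this]
    exact mul_mem (inv_mem (hGB β1 hβ1supp)) hσ'

end LemmaL

end SymCofAux

open SymCofAux in
/-- For an infinite set `Ω`, the cofinality of `Sym(Ω)` is strictly greater than `|Ω|`:
`Sym(Ω)` is not the union of a chain of proper subgroups indexed by a linearly ordered
set of cardinality at most `|Ω|`. -/
theorem sym_cofinality_gt (Ω : Type) [Infinite Ω]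
    (ι : Type) [LinearOrder ι] (hcard : Cardinal.mk ι ≤ Cardinal.mk Ω)
    (H : ι → Subgroup (Equiv.Perm Ω)) (hchain : Monotone H)
    (hproper : ∀ i, H i ≠ ⊤) :
    (⋃ i, (H i : Set (Equiv.Perm Ω))) ≠ Set.univ := by
  classical
  intro hU
  rcases isEmpty_or_nonempty ι with hempty | hne
  · have h1 : (1 : Equiv.Perm Ω) ∈ ⋃ i, (H i : Set (Equiv.Perm Ω)) := hU ▸ Set.mem_univ 1
    rw [Set.mem_iUnion] at h1
    obtain ⟨i, _⟩ := h1
    exact IsEmpty.false i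
  rcases finite_or_infinite ι with hfin | hinf
  · obtain ⟨m, hm⟩ := Finite.exists_max (fun i : ι => i)
    apply hproper m
    rw [← Subgroup.coe_eq_univ]
    apply Set.eq_univ_of_univ_subset
    rw [← hU]
    intro g hg
    rw [Set.mem_iUnion] at hg
    obtain ⟨i, hi⟩ := hg
    exact hchain (hm i) hi
  · -- main case: ι infinite
    -- the structured copy of Ω
    have hmk1 : #(Ω × ℤ) = #Ω := mkZfull
    have hmk2 : #((Ω × ℤ) × ℤ) = #Ω := (mkZfull (Y := Ω × ℤ)).trans hmk1
    have hZcard : #(ι × ((Ω × ℤ) × ℤ)) = #Ω := by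
      rw [Cardinal.mk_prod]
      simp only [Cardinal.lift_id]
      rw [hmk2, mul_comm]
      exact Cardinal.mul_eq_left (Cardinal.aleph0_le_mk Ω) hcard (Cardinal.mk_ne_zero ι)
    obtain ⟨E0⟩ := Cardinal.eq.mp hZcard
    set E : Ω ≃ ι × ((Ω × ℤ) × ℤ) := E0.symm with hE
    -- pigeonhole: some H k is fully full on its slice
    have hpig : ∃ k : ι, ∀ φ : Equiv.Perm ((Ω × ℤ) × ℤ),
        ∃ g ∈ H k, ∀ z, g (E.symm (k, z)) = E.symm (k, φ z) := by
      by_contra hno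
      push_neg at hno
      choose φf hφf using hno
      set g0 : Equiv.Perm Ω := transfer E.symm (sliceFam φf) with hg0def
      have hg0 : g0 ∈ ⋃ i, (H i : Set (Equiv.Perm Ω)) := hU ▸ Set.mem_univ _
      rw [Set.mem_iUnion] at hg0
      obtain ⟨k, hk⟩ := hg0
      obtain ⟨z, hz⟩ := hφf k g0 hk
      apply hz
      rw [hg0def, transfer_apply]
      simp
    obtain ⟨k, hfull⟩ := hpig
    -- the canonical shift on slice k
    set r : Equiv.Perm ((Ω × ℤ) × ℤ) := shiftZ with hrdef
    set ρ : Equiv.Perm Ω := pureSlice E k r with hρdef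
    have hρmem : ρ ∈ ⋃ i, (H i : Set (Equiv.Perm Ω)) := hU ▸ Set.mem_univ _
    rw [Set.mem_iUnion] at hρmem
    obtain ⟨m1, hm1⟩ := hρmem
    obtain ⟨j1, hkj1, hρ1⟩ : ∃ j, H k ≤ H j ∧ ρ ∈ H j := by
      rcases le_total k m1 with h | h
      · exact ⟨m1, hchain h, hm1⟩
      · exact ⟨k, le_rfl, hchain h hm1⟩
    -- all pure slice-k permutations lie in H j1
    have hpure : ∀ χ : Equiv.Perm ((Ω × ℤ) × ℤ), pureSlice E k χ ∈ H j1 := by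
      have hgen : ∀ φ : Equiv.Perm ((Ω × ℤ) × ℤ),
          pureSlice E k ⁅φ, (shiftZ : Equiv.Perm ((Ω × ℤ) × ℤ))⁆ ∈ H j1 := by
        intro φ
        obtain ⟨g, hg, hmatch⟩ := hfull φ
        have hgj1 : g ∈ H j1 := hkj1 hg
        have heq := comm_is_pure E k (hm := hmatch) (hρ := hρdef)
        rw [commutatorElement_def, ← heq]
        exact mul_mem (mul_mem (mul_mem hgj1 hρ1) (inv_mem hgj1)) (inv_mem hρ1)
      intro χ
      have hmem : χ ∈ (NN : Subgroup (Equiv.Perm ((Ω × ℤ) × ℤ))) := NN_eq_top χ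
      have hle : (NN : Subgroup (Equiv.Perm ((Ω × ℤ) × ℤ))) ≤
          (H j1).comap (pureSlice E k) := by
        apply (Subgroup.closure_le _).mpr
        rintro c ⟨φ, rfl⟩
        exact hgen φ
      exact (Subgroup.mem_comap).mp (hle hmem)
    -- regions
    set A : Set Ω := {x | (E x).1 = k} with hAdef
    set A0 : Set Ω := {x | (E x).1 = k ∧ (E x).2.2 = 0} with hA0def
    set B : Set Ω := A0ᶜ with hBdef
    set C1 : Set Ω := {x | (E x).1 = k ∧ 1 ≤ (E x).2.2} with hC1def
    set C2 : Set Ω := {x | (E x).1 = k ∧ (E x).2.2 ≤ -1} with hC2def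
    -- basic injections for cardinalities
    have hinjgen : ∀ (i0 : ι) (lv : ℤ),
        Function.Injective (fun ω : Ω => E.symm (i0, ((ω, 0), lv))) := by
      intro i0 lv a b hab
      have := E.symm.injective hab
      simp only [Prod.mk.injEq] at this
      exact this.2.1.1
    have hmkC1 : #C1 = #Ω := by
      apply mk_set_eq_of_inj C1 (fun ω => ⟨E.symm (k, ((ω, 0), 1)), by
        constructor <;> simp [hC1def]⟩)
      intro a b hab
      exact hinjgen k 1 (congrArg Subtype.val hab)
    have hmkC2 : #C2 = #Ω := by
      apply mk_set_eq_of_inj C2 (fun ω => ⟨E.symm (k, ((ω, 0), -1)), by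
        constructor <;> simp [hC2def]⟩)
      intro a b hab
      exact hinjgen k (-1) (congrArg Subtype.val hab)
    have hmkA : #A = #Ω := by
      apply mk_set_eq_of_inj A (fun ω => ⟨E.symm (k, ((ω, 0), 0)), by simp [hAdef]⟩)
      intro a b hab
      exact hinjgen k 0 (congrArg Subtype.val hab)
    have hmkB : #B = #Ω := by
      apply mk_set_eq_of_inj B (fun ω => ⟨E.symm (k, ((ω, 0), 1)), by
        simp only [hBdef, Set.mem_compl_iff, hA0def, Set.mem_setOf_eq]
        rintro ⟨-, h0⟩
        simp at h0⟩)
      intro a b hab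
      exact hinjgen k 1 (congrArg Subtype.val hab)
    have hmkA0 : #A0 = #Ω := by
      apply mk_set_eq_of_inj A0 (fun ω => ⟨E.symm (k, ((ω, 0), 0)), by
        constructor <;> simp [hA0def]⟩)
      intro a b hab
      exact hinjgen k 0 (congrArg Subtype.val hab)
    haveI : Nontrivial ι := Infinite.instNontrivial ι
    obtain ⟨k', hk'⟩ := exists_ne k
    have hmkAc : #↥(Aᶜ) = #Ω := by
      apply mk_set_eq_of_inj _ (fun ω => ⟨E.symm (k', ((ω, 0), 0)), by
        simp [hAdef, hk']⟩)
      intro a b hab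
      exact hinjgen k' 0 (congrArg Subtype.val hab)
    -- the mover μ with μ '' A = B
    have eAB : ↥A ≃ ↥B := Classical.choice (Cardinal.eq.mp (hmkA.trans hmkB.symm))
    have hcAB : #↥(Set.univ \ A) = #↥(Set.univ \ B) := by
      have e1 : Set.univ \ A = Aᶜ := by rw [Set.compl_eq_univ_diff]
      have e2 : Set.univ \ B = A0 := by
        rw [hBdef, Set.diff_compl, Set.univ_inter]
      rw [e1, e2, hmkAc, hmkA0]
    set μ := permWithin Set.univ A B (Set.subset_univ _) (Set.subset_univ _) eAB hcAB with hμdef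
    have himg : ⇑μ '' A = B :=
      permWithin_image Set.univ A B (Set.subset_univ _) (Set.subset_univ _) eAB hcAB
    have hμmem : μ ∈ ⋃ i, (H i : Set (Equiv.Perm Ω)) := hU ▸ Set.mem_univ _
    rw [Set.mem_iUnion] at hμmem
    obtain ⟨m2, hm2⟩ := hμmem
    obtain ⟨j2, hj12, hμ2⟩ : ∃ j, H j1 ≤ H j ∧ μ ∈ H j := by
      rcases le_total j1 m2 with h | h
      · exact ⟨m2, hchain h, hm2⟩
      · exact ⟨j1, le_rfl, hchain h hm2⟩
    -- supported subgroups are inside H j2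
    have hGA : ∀ g ∈ suppIn A, g ∈ H j2 := by
      intro g hg
      obtain ⟨χ, rfl⟩ := suppIn_slice_eq E k g (fun x hx => hg x hx)
      exact hj12 (hpure χ)
    have hμcompl : ∀ x, x ∉ A → μ x ∉ B := by
      intro x hx hB
      rw [← himg] at hB
      obtain ⟨a, ha, haeq⟩ := hB
      exact hx (μ.injective haeq ▸ ha)
    have hGB : ∀ g ∈ suppIn B, g ∈ H j2 := by
      intro g hg
      have hconj : μ⁻¹ * g * μ ∈ suppIn A := by
        intro x hx
        show μ⁻¹ (g (μ x)) = x
        rw [hg (μ x) (hμcompl x hx), Equiv.Perm.inv_apply_self]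
      have : g = μ * (μ⁻¹ * g * μ) * μ⁻¹ := by group
      rw [this]
      exact mul_mem (mul_mem hμ2 (hGA _ hconj)) (inv_mem hμ2)
    -- apply the generation lemma
    have htop : ∀ σ : Equiv.Perm Ω, σ ∈ H j2 := by
      intro σ
      apply lemmaL A B C1 C2 ?_ ?_ ?_ ?_ ?_ ?_ hmkC1 hmkC2 (H j2) hGA hGB σ
      · -- A ∪ B = univ
        apply Set.eq_univ_of_forall
        intro x
        by_cases hx : x ∈ A
        · exact Or.inl hx
        · refine Or.inr ?_
          intro hx0
          exact hx hx0.1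
      · exact fun x hx => hx.1
      · rintro x ⟨-, h1⟩ 
        rintro ⟨-, h0⟩
        omega
      · exact fun x hx => hx.1
      · rintro x ⟨-, h1⟩
        rintro ⟨-, h0⟩
        omega
      · rintro x ⟨-, h1⟩ ⟨-, h2⟩
        omega
    apply hproper j2
    rw [Subgroup.eq_top_iff']
    exact htop
end

section
/- Let G be a group with trivial center. Then Aut(G) is complete (i.e., has trivial center and all its automorphisms are inner) if and only if the subgroup Inn(G) of inner automorphisms is a characteristic subgroup of Aut(G). (Burnside's criterion.) -/
section Aux

variable {G : Type} [Group G]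

/-- Conjugating `MulAut.conj g` by an automorphism `α` gives `MulAut.conj (α g)`. -/
lemma aux_conj_conj (α : MulAut G) (g : G) :
    α * MulAut.conj g * α⁻¹ = MulAut.conj (α g) := by
  ext x
  show α (MulAut.conj g (α⁻¹ x)) = MulAut.conj (α g) x
  simp [MulAut.conj_apply, mul_assoc]

/-- If `G` has trivial center, `MulAut.conj` is injective. -/
lemma aux_conj_inj (hZ : Subgroup.center G = ⊥) :
    Function.Injective (MulAut.conj : G →* MulAut G) := by
  intro a b hab
  have h : b⁻¹ * a ∈ Subgroup.center G := by
    rw [Subgroup.mem_center_iff]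
    intro x
    have hx : a * x * a⁻¹ = b * x * b⁻¹ := by
      have := congrArg (fun f : MulAut G => f x) hab
      simpa [MulAut.conj_apply] using this
    calc x * (b⁻¹ * a) = b⁻¹ * (b * x * b⁻¹) * a := by group
      _ = b⁻¹ * (a * x * a⁻¹) * a := by rw [hx]
      _ = b⁻¹ * a * x := by group
  rw [hZ, Subgroup.mem_bot] at h
  have := congrArg (fun y => b * y) h
  simpa [mul_assoc] using this

end Aux

/-- Burnside's criterion: for a group `G` with trivial center, `Aut(G)` is complete
(trivial center and every automorphism inner) iff `Inn(G)` (the range of the conjugation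
homomorphism `G →* Aut(G)`) is a characteristic subgroup of `Aut(G)`. -/
theorem burnside_completeness_criterion (G : Type) [Group G]
    (hZ : Subgroup.center G = ⊥) :
    (Subgroup.center (MulAut G) = ⊥ ∧
        ∀ ψ : MulAut (MulAut G), ∃ γ : MulAut G, ψ = MulAut.conj γ) ↔
      (∀ φ : MulAut (MulAut G),
        Subgroup.map φ.toMonoidHom (MulAut.conj : G →* MulAut G).range =
          (MulAut.conj : G →* MulAut G).range) := by
  have hinj := aux_conj_inj hZ
  constructor
  · rintro ⟨-, hsurj⟩ φ
    obtain ⟨γ, rfl⟩ := hsurj φ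
    ext β
    simp only [Subgroup.mem_map, MonoidHom.mem_range]
    constructor
    · rintro ⟨-, ⟨g, rfl⟩, rfl⟩
      exact ⟨γ g, (aux_conj_conj γ g).symm⟩
    · rintro ⟨g, rfl⟩
      refine ⟨MulAut.conj (γ⁻¹ g), ⟨γ⁻¹ g, rfl⟩, ?_⟩
      show γ * MulAut.conj (γ⁻¹ g) * γ⁻¹ = MulAut.conj g
      rw [aux_conj_conj]
      simp
  · intro hchar
    constructor
    · -- trivial center of Aut G
      rw [eq_bot_iff]
      intro α hα
      rw [Subgroup.mem_bot]
      ext g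
      have hc : MulAut.conj g * α = α * MulAut.conj g :=
        (Subgroup.mem_center_iff.mp hα) (MulAut.conj g)
      have : MulAut.conj (α g) = MulAut.conj g := by
        rw [← aux_conj_conj α g, ← hc]
        group
      exact hinj this
    · intro ψ
      -- ψ maps Inn(G) bijectively onto itself; extract θ : G → G
      have hmem : ∀ (χ : MulAut (MulAut G)) (g : G),
          χ (MulAut.conj g) ∈ (MulAut.conj : G →* MulAut G).range := by
        intro χ g
        rw [← hchar χ]
        exact ⟨MulAut.conj g, ⟨g, rfl⟩, rfl⟩
      choose θ hθ using fun g => hmem ψ g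
      choose τ hτ using fun g => hmem ψ⁻¹ g
      have hθτ : ∀ g, θ (τ g) = g := by
        intro g
        apply hinj
        rw [hθ, hτ]
        simp
      have hτθ : ∀ g, τ (θ g) = g := by
        intro g
        apply hinj
        rw [hτ, hθ]
        simp
      have hθmul : ∀ a b, θ (a * b) = θ a * θ b := by
        intro a b
        apply hinj
        rw [map_mul, hθ, hθ, hθ, map_mul, map_mul]
      let θ' : MulAut G := ⟨⟨θ, τ, hτθ, hθτ⟩, hθmul⟩
      refine ⟨θ', ?_⟩
      refine MulEquiv.ext fun α => ?_
      show ψ α = θ' * α * θ'⁻¹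
      have key : θ'⁻¹ * ψ α * θ' = α := by
        ext g
        apply hinj
        show MulAut.conj ((θ'⁻¹ * ψ α * θ') g) = MulAut.conj (α g)
        rw [← aux_conj_conj (θ'⁻¹ * ψ α * θ') g]
        have h1 : θ' * MulAut.conj g * θ'⁻¹ = ψ (MulAut.conj g) := by
          rw [aux_conj_conj]; exact hθ g
        have h2 : ψ α * ψ (MulAut.conj g) * (ψ α)⁻¹ = MulAut.conj (θ' (α g)) := by
          rw [← map_mul, ← map_inv, ← map_mul, aux_conj_conj]; exact (hθ _).symm
        calc θ'⁻¹ * ψ α * θ' * MulAut.conj g * (θ'⁻¹ * ψ α * θ')⁻¹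
            = θ'⁻¹ * (ψ α * (θ' * MulAut.conj g * θ'⁻¹) * (ψ α)⁻¹) * θ' := by group
          _ = θ'⁻¹ * MulAut.conj (θ' (α g)) * θ' := by rw [h1, h2]
          _ = MulAut.conj (θ'⁻¹ (θ' (α g))) := by
              have h3 := aux_conj_conj θ'⁻¹ (θ' (α g)); rw [inv_inv] at h3; exact h3
          _ = MulAut.conj (α g) := by rw [show θ'⁻¹ (θ' (α g)) = α g from hτθ _]
      calc ψ α = θ' * (θ'⁻¹ * ψ α * θ') * θ'⁻¹ := by group
        _ = θ' * α * θ'⁻¹ := by rw [key]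
end

section
/- Let F be a free group of infinite rank. Then every element of F is a product of two primitive elements of F. -/
/-- An element of a free group is primitive if it belongs to some basis (free generating
set) of the group. -/
def IsPrimitive {α : Type} (g : FreeGroup α) : Prop :=
  ∃ (S : Set (FreeGroup α)) (b : FreeGroupBasis S (FreeGroup α)),
    (∀ s : S, b s = (s : FreeGroup α)) ∧ g ∈ S

open FreeGroup in
/-- A hom fixing all letters of `g` fixes `g`. -/
lemma hom_fix {α : Type} [DecidableEq α] (h : FreeGroup α →* FreeGroup α) (g : FreeGroup α)
    (H : ∀ x ∈ g.toWord.map Prod.fst, h (of x) = of x) : h g = g := by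
  have hh : h = FreeGroup.lift (fun x => h (of x)) := by
    apply FreeGroup.ext_hom; intro a; simp
  conv_lhs => rw [← FreeGroup.mk_toWord (x := g), hh, FreeGroup.lift_mk]
  conv_rhs => rw [← FreeGroup.mk_toWord (x := g),
    show (mk g.toWord) = FreeGroup.lift of (mk g.toWord) by rw [lift_of_eq_id]; rfl,
    FreeGroup.lift_mk]
  congr 1
  apply List.map_congr_left
  intro p hp
  rw [H p.1 (List.mem_map.2 ⟨p, hp, rfl⟩)]

/-- The image of a standard generator under an automorphism is primitive. -/
lemma prim_of_aut {α : Type} (e : FreeGroup α ≃* FreeGroup α) (a : α) :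
    IsPrimitive (e (FreeGroup.of a)) := by
  set f : α → FreeGroup α := fun x => e (FreeGroup.of x) with hf
  have hinj : Function.Injective f := e.injective.comp FreeGroup.of_injective
  refine ⟨Set.range f,
    ((FreeGroupBasis.ofFreeGroup α).map e).reindex (Equiv.ofInjective f hinj), ?_, ⟨a, rfl⟩⟩
  intro s
  simp only [FreeGroupBasis.reindex_apply, FreeGroupBasis.map_apply,
    FreeGroupBasis.ofFreeGroup_apply]
  exact Equiv.apply_ofInjective_symm hinj s

/-- In a free group of infinite rank, every element is a product of two primitive
elements. -/
theorem product_of_two_primitives (α : Type) [Infinite α] (g : FreeGroup α) :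
    ∃ p q : FreeGroup α, IsPrimitive p ∧ IsPrimitive q ∧ g = p * q := by
  classical
  obtain ⟨a, ha⟩ := Infinite.exists_notMem_finset (g.toWord.map Prod.fst).toFinset
  have ha' : ∀ x ∈ g.toWord.map Prod.fst, x ≠ a := by
    intro x hx h; exact ha (h ▸ List.mem_toFinset.2 hx)
  -- automorphism sending of a ↦ g * of a
  set φ : FreeGroup α →* FreeGroup α :=
    FreeGroup.lift (fun x => if x = a then g * FreeGroup.of x else FreeGroup.of x) with hφ
  set ψ : FreeGroup α →* FreeGroup α :=
    FreeGroup.lift (fun x => if x = a then g⁻¹ * FreeGroup.of x else FreeGroup.of x) with hψ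
  have hφg : φ g = g := hom_fix φ g (by
    intro x hx; simp [hφ, FreeGroup.lift_apply_of, if_neg (ha' x hx)])
  have hψg : ψ g = g := hom_fix ψ g (by
    intro x hx; simp [hψ, FreeGroup.lift_apply_of, if_neg (ha' x hx)])
  have h1 : ψ.comp φ = MonoidHom.id _ := by
    apply FreeGroup.ext_hom; intro x
    by_cases h : x = a
    · subst h
      simp [hφ, hψ, FreeGroup.lift_apply_of, (hψ ▸ hψg)]
    · simp [hφ, hψ, FreeGroup.lift_apply_of, if_neg h]
  have h2 : φ.comp ψ = MonoidHom.id _ := by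
    apply FreeGroup.ext_hom; intro x
    by_cases h : x = a
    · subst h
      simp [hφ, hψ, FreeGroup.lift_apply_of, (hφ ▸ hφg)]
    · simp [hφ, hψ, FreeGroup.lift_apply_of, if_neg h]
  set e : FreeGroup α ≃* FreeGroup α := MonoidHom.toMulEquiv φ ψ h1 h2 with he
  -- automorphism sending of a ↦ (of a)⁻¹
  set χ : FreeGroup α →* FreeGroup α :=
    FreeGroup.lift (fun x => if x = a then (FreeGroup.of x)⁻¹ else FreeGroup.of x) with hχ
  have h3 : χ.comp χ = MonoidHom.id _ := by
    apply FreeGroup.ext_hom; intro x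
    by_cases h : x = a
    · subst h; simp [hχ, FreeGroup.lift_apply_of]
    · simp [hχ, FreeGroup.lift_apply_of, if_neg h]
  set e' : FreeGroup α ≃* FreeGroup α := MonoidHom.toMulEquiv χ χ h3 h3 with he'
  refine ⟨g * FreeGroup.of a, (FreeGroup.of a)⁻¹, ?_, ?_, by group⟩
  · have : e (FreeGroup.of a) = g * FreeGroup.of a := by
      simp [he, MonoidHom.toMulEquiv, hφ, FreeGroup.lift_apply_of]
    exact this ▸ prim_of_aut e a
  · have : e' (FreeGroup.of a) = (FreeGroup.of a)⁻¹ := by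
      simp [he', MonoidHom.toMulEquiv, hχ, FreeGroup.lift_apply_of]
    exact this ▸ prim_of_aut e' a
end
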